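/- Let L be a self-adjoint operator on a real Hilbert space with inf spec(L) = μ an eigenvalue whose normalized eigenfunctions are strictly positive (componentwise, pointwise) functions, and suppose T is a known eigenfunction of L with eigenvalue 0 such that T > 0 pointwise. Then μ = 0 and the zero eigenvalue is non-degenerate with eigenspace spanned by T. (If μ < 0, the ground state S > 0 would satisfy ⟨S, T⟩ = 0, impossible since both are strictly positive.) -/

import Mathlib

open Set MeasureTheory

/-- The measure `r dr` on `(0,∞)`. -/
noncomputable def rmeasure : Measure ℝ :=
  (volume.restrict (Set.Ioi (0:ℝ))).withDensity fun r => ENNReal.ofReal r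

/-- if the bottom of the spectrum `μ` of a symmetric operator `L` (here
realized on vector-valued functions on `(0,∞)` with the `L²(r dr)` pairing) is an
eigenvalue whose eigenfunctions are pointwise sign-definite, and `T` is a known strictly
positive eigenfunction of `L` with eigenvalue `0`, then `μ = 0` and the zero eigenvalue
is non-degenerate with eigenspace spanned by `T`. -/
lemma stmt17_int_mul {u v : ℝ → Fin 4 → ℝ} (hu : MemLp (fun r => u r) 2 rmeasure)
    (hv : MemLp (fun r => v r) 2 rmeasure) :
    Integrable (fun r => ∑ k, u r k * v r k) rmeasure := by
  apply integrable_finset_sum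
  intro k _
  have hu' : MemLp (fun r => u r k) 2 rmeasure :=
    (ContinuousLinearMap.proj (R := ℝ) (φ := fun _ : Fin 4 => ℝ) k).comp_memLp' hu
  have hv' : MemLp (fun r => v r k) 2 rmeasure :=
    (ContinuousLinearMap.proj (R := ℝ) (φ := fun _ : Fin 4 => ℝ) k).comp_memLp' hv
  have := hv'.smul (φ := fun r => u r k) hu'
    (r := 1)
  rw [← memLp_one_iff_integrable]
  exact this


theorem stmt17 (L : (ℝ → Fin 4 → ℝ) →ₗ[ℝ] (ℝ → Fin 4 → ℝ)) (μ : ℝ)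
    -- symmetry of L w.r.t. the L²(r dr) pairing:
    (hsym : ∀ u v : ℝ → Fin 4 → ℝ,
      (∫ r, (∑ k, L u r k * v r k) ∂rmeasure) = ∫ r, (∑ k, u r k * L v r k) ∂rmeasure)
    -- μ is an eigenvalue (the infimum of the spectrum), witnessed by S:
    (S : ℝ → Fin 4 → ℝ) (hS : L S = μ • S)
    (hSne : ∃ r ∈ Ioi (0:ℝ), S r ≠ 0)
    (hSL2 : MemLp (fun r => S r) 2 rmeasure)
    -- μ is a lower bound for all L² eigenvalues of L:
    (hmin : ∀ ν : ℝ, ∀ u : ℝ → Fin 4 → ℝ, (∃ r ∈ Ioi (0:ℝ), u r ≠ 0) →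
      MemLp (fun r => u r) 2 rmeasure → L u = ν • u → μ ≤ ν)
    -- eigenfunctions at μ are pointwise sign-definite (strictly positive up to sign):
    (hgs : ∀ u : ℝ → Fin 4 → ℝ, L u = μ • u → (∃ r ∈ Ioi (0:ℝ), u r ≠ 0) →
      (∀ r ∈ Ioi (0:ℝ), ∀ k, 0 < u r k) ∨ (∀ r ∈ Ioi (0:ℝ), ∀ k, u r k < 0))
    -- T is a strictly positive eigenfunction with eigenvalue 0:
    (T : ℝ → Fin 4 → ℝ) (hT : L T = 0)
    (hTpos : ∀ r ∈ Ioi (0:ℝ), ∀ k, 0 < T r k)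
    (hTL2 : MemLp (fun r => T r) 2 rmeasure)
    -- pairings of strictly positive L² functions are strictly positive:
    (hpair : ∀ u v : ℝ → Fin 4 → ℝ,
      MemLp (fun r => u r) 2 rmeasure → MemLp (fun r => v r) 2 rmeasure →
      (∀ r ∈ Ioi (0:ℝ), ∀ k, 0 < u r k) → (∀ r ∈ Ioi (0:ℝ), ∀ k, 0 < v r k) →
      0 < ∫ r, (∑ k, u r k * v r k) ∂rmeasure) :
    μ = 0 ∧
    ∀ u : ℝ → Fin 4 → ℝ, MemLp (fun r => u r) 2 rmeasure → L u = 0 →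
      ∃ c : ℝ, ∀ r ∈ Ioi (0:ℝ), u r = c • T r := by
  -- abbreviation for the pairing
  have pairing_neg : ∀ v : ℝ → Fin 4 → ℝ,
      (∫ r, (∑ k, (-v) r k * T r k) ∂rmeasure) = -∫ r, (∑ k, v r k * T r k) ∂rmeasure := by
    intro v
    rw [← integral_neg]
    congr 1; funext r
    simp [neg_mul, Finset.sum_neg_distrib]
  have hSTne : (∫ r, (∑ k, S r k * T r k) ∂rmeasure) ≠ 0 := by
    rcases hgs S hS hSne with hpos | hneg
    · exact (hpair S T hSL2 hTL2 hpos hTpos).ne'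
    · have h1 : ∀ r ∈ Ioi (0:ℝ), ∀ k, 0 < (-S) r k := by
        intro r hr k; simpa using hneg r hr k
      have h2 := hpair (-S) T hSL2.neg hTL2 h1 hTpos
      rw [pairing_neg S] at h2
      linarith
  have hmu : μ = 0 := by
    have h := hsym S T
    rw [hS, hT] at h
    have hr : (∫ r, (∑ k, S r k * (0 : ℝ → Fin 4 → ℝ) r k) ∂rmeasure) = 0 := by
      simp
    have hl : (∫ r, (∑ k, (μ • S) r k * T r k) ∂rmeasure)
        = μ * ∫ r, (∑ k, S r k * T r k) ∂rmeasure := by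
      rw [← integral_const_mul]
      congr 1; funext r
      simp [Finset.mul_sum, mul_assoc]
    rw [hl, hr] at h
    rcases mul_eq_zero.mp h with h' | h'
    · exact h'
    · exact absurd h' hSTne
  refine ⟨hmu, ?_⟩
  intro u hu hLu
  by_cases hune : ∃ r ∈ Ioi (0:ℝ), u r ≠ 0
  · -- nontrivial case
    set B := ∫ r, (∑ k, T r k * T r k) ∂rmeasure with hB
    set A := ∫ r, (∑ k, u r k * T r k) ∂rmeasure with hA
    have hBpos : 0 < B := hpair T T hTL2 hTL2 hTpos hTpos
    set c := A / B with hc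
    refine ⟨c, ?_⟩
    set w : ℝ → Fin 4 → ℝ := u - c • T with hw
    have hwL2 : MemLp (fun r => w r) 2 rmeasure := hu.sub (hTL2.const_smul c)
    have hLw : L w = μ • w := by
      rw [hw, map_sub, LinearMap.map_smul, hLu, hT, hmu, zero_smul, smul_zero, sub_zero]
    have hwortho : (∫ r, (∑ k, w r k * T r k) ∂rmeasure) = 0 := by
      have hsplit : (fun r => ∑ k, w r k * T r k)
          = fun r => (∑ k, u r k * T r k) - c * (∑ k, T r k * T r k) := by
        funext r
        rw [Finset.mul_sum, ← Finset.sum_sub_distrib]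
        congr 1; funext k
        simp [hw, sub_mul, mul_assoc]
      rw [hsplit, integral_sub (stmt17_int_mul hu hTL2)
        ((stmt17_int_mul hTL2 hTL2).const_mul c), integral_const_mul, ← hA, ← hB, hc,
        div_mul_cancel₀ _ hBpos.ne']
      ring
    intro r hr
    by_contra hne
    have hwne : ∃ r ∈ Ioi (0:ℝ), w r ≠ 0 := by
      refine ⟨r, hr, ?_⟩
      intro h0
      apply hne
      have : u r - c • T r = 0 := h0
      have := sub_eq_zero.mp this
      exact this
    rcases hgs w hLw hwne with hpos | hneg
    · exact absurd hwortho (hpair w T hwL2 hTL2 hpos hTpos).ne'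
    · have h1 : ∀ r ∈ Ioi (0:ℝ), ∀ k, 0 < (-w) r k := by
        intro r hr k; simpa using hneg r hr k
      have h2 := hpair (-w) T hwL2.neg hTL2 h1 hTpos
      rw [pairing_neg w, hwortho] at h2
      simp at h2
  · push_neg at hune
    refine ⟨0, fun r hr => ?_⟩
    simp [hune r hr]
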